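/- For all x > 0, (sinh x)/x > (1/2 + (1/2)·cosh^{16/15} x)^{5/8}. -/

import Mathlib

open Real Set Filter


private lemma nn04 (F F' : ℝ → ℝ) (hF : ∀ t, HasDerivAt F (F' t) t)
    (h0 : 0 ≤ F 0) (hd : ∀ t, 0 ≤ t → t ≤ 4 → 0 ≤ F' t) :
    ∀ t, 0 ≤ t → t ≤ 4 → 0 ≤ F t := by
  intro t ht0 ht4
  have mono : MonotoneOn F (Icc (0:ℝ) 4) := by
    apply monotoneOn_of_deriv_nonneg (convex_Icc 0 4)
      (fun x _ => (hF x).continuousAt.continuousWithinAt)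
      (fun x _ => (hF x).differentiableAt.differentiableWithinAt)
    intro x hx
    rw [interior_Icc] at hx
    rw [(hF x).deriv]
    exact hd x hx.1.le hx.2.le
  have h := mono (left_mem_Icc.mpr (by norm_num)) ⟨ht0, ht4⟩ ht0
  linarith

private lemma exp4_lt : Real.exp 4 < 55 := by
  have h : Real.exp 4 = Real.exp 1 ^ (4:ℕ) := by
    rw [← Real.exp_nat_mul]; norm_num
  have h2 : Real.exp 1 ^ (4:ℕ) < 2.7182818286 ^ (4:ℕ) :=
    pow_lt_pow_left₀ Real.exp_one_lt_d9 (Real.exp_pos 1).le (by norm_num)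
  rw [h]
  calc Real.exp 1 ^ (4:ℕ) < 2.7182818286 ^ (4:ℕ) := h2
    _ < 55 := by norm_num

lemma cosh_le_28 : ∀ t, 0 ≤ t → t ≤ 4 → Real.cosh t ≤ 28 := by
  intro t ht0 ht4
  rw [Real.cosh_eq]
  have h1 : Real.exp t ≤ Real.exp 4 := Real.exp_le_exp.mpr ht4
  have h2 : Real.exp (-t) ≤ Real.exp 0 := Real.exp_le_exp.mpr (by linarith)
  rw [Real.exp_zero] at h2
  linarith [exp4_lt]
lemma sL1 : ∀ t, 0 ≤ t → t ≤ 4 → 1*t^1 ≤ Real.sinh t := by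
  have key := nn04 (fun t => Real.sinh t - (1*t^1)) (fun t => Real.cosh t - ((1:ℝ)))
    (fun y => by
      have h1 := (Real.hasDerivAt_sinh y).sub ((hasDerivAt_pow 1 y).const_mul (1 : ℝ))
      refine h1.congr_deriv ?_
      push_cast; ring)
    (by norm_num)
    (fun y hy0 hy4 => by
      have hp := Real.one_le_cosh y
      beta_reduce
      linarith)
  intro t ht0 ht4
  have := key t ht0 ht4
  beta_reduce at this
  linarith

lemma cL2 : ∀ t, 0 ≤ t → t ≤ 4 → (1:ℝ) + 1/2*t^2 ≤ Real.cosh t := by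
  have key := nn04 (fun t => Real.cosh t - ((1:ℝ) + 1/2*t^2)) (fun t => Real.sinh t - (1*t^1))
    (fun y => by
      have h1 := (Real.hasDerivAt_cosh y).sub ((hasDerivAt_const y (1 : ℝ)).add ((hasDerivAt_pow 2 y).const_mul (1/2 : ℝ)))
      refine h1.congr_deriv ?_
      push_cast; ring)
    (by norm_num)
    (fun y hy0 hy4 => by
      have hp := sL1 y hy0 hy4
      beta_reduce
      linarith)
  intro t ht0 ht4
  have := key t ht0 ht4
  beta_reduce at this
  linarith

lemma sL3 : ∀ t, 0 ≤ t → t ≤ 4 → 1*t^1 + 1/6*t^3 ≤ Real.sinh t := by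
  have key := nn04 (fun t => Real.sinh t - (1*t^1 + 1/6*t^3)) (fun t => Real.cosh t - ((1:ℝ) + 1/2*t^2))
    (fun y => by
      have h1 := (Real.hasDerivAt_sinh y).sub (((hasDerivAt_pow 1 y).const_mul (1 : ℝ)).add ((hasDerivAt_pow 3 y).const_mul (1/6 : ℝ)))
      refine h1.congr_deriv ?_
      push_cast; ring)
    (by norm_num)
    (fun y hy0 hy4 => by
      have hp := cL2 y hy0 hy4
      beta_reduce
      linarith)
  intro t ht0 ht4
  have := key t ht0 ht4
  beta_reduce at this
  linarith

lemma cL4 : ∀ t, 0 ≤ t → t ≤ 4 → (1:ℝ) + 1/2*t^2 + 1/24*t^4 ≤ Real.cosh t := by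
  have key := nn04 (fun t => Real.cosh t - ((1:ℝ) + 1/2*t^2 + 1/24*t^4)) (fun t => Real.sinh t - (1*t^1 + 1/6*t^3))
    (fun y => by
      have h1 := (Real.hasDerivAt_cosh y).sub (((hasDerivAt_const y (1 : ℝ)).add ((hasDerivAt_pow 2 y).const_mul (1/2 : ℝ))).add ((hasDerivAt_pow 4 y).const_mul (1/24 : ℝ)))
      refine h1.congr_deriv ?_
      push_cast; ring)
    (by norm_num)
    (fun y hy0 hy4 => by
      have hp := sL3 y hy0 hy4
      beta_reduce
      linarith)
  intro t ht0 ht4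
  have := key t ht0 ht4
  beta_reduce at this
  linarith

lemma sL5 : ∀ t, 0 ≤ t → t ≤ 4 → 1*t^1 + 1/6*t^3 + 1/120*t^5 ≤ Real.sinh t := by
  have key := nn04 (fun t => Real.sinh t - (1*t^1 + 1/6*t^3 + 1/120*t^5)) (fun t => Real.cosh t - ((1:ℝ) + 1/2*t^2 + 1/24*t^4))
    (fun y => by
      have h1 := (Real.hasDerivAt_sinh y).sub ((((hasDerivAt_pow 1 y).const_mul (1 : ℝ)).add ((hasDerivAt_pow 3 y).const_mul (1/6 : ℝ))).add ((hasDerivAt_pow 5 y).const_mul (1/120 : ℝ)))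
      refine h1.congr_deriv ?_
      push_cast; ring)
    (by norm_num)
    (fun y hy0 hy4 => by
      have hp := cL4 y hy0 hy4
      beta_reduce
      linarith)
  intro t ht0 ht4
  have := key t ht0 ht4
  beta_reduce at this
  linarith

lemma cL6 : ∀ t, 0 ≤ t → t ≤ 4 → (1:ℝ) + 1/2*t^2 + 1/24*t^4 + 1/720*t^6 ≤ Real.cosh t := by
  have key := nn04 (fun t => Real.cosh t - ((1:ℝ) + 1/2*t^2 + 1/24*t^4 + 1/720*t^6)) (fun t => Real.sinh t - (1*t^1 + 1/6*t^3 + 1/120*t^5))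
    (fun y => by
      have h1 := (Real.hasDerivAt_cosh y).sub ((((hasDerivAt_const y (1 : ℝ)).add ((hasDerivAt_pow 2 y).const_mul (1/2 : ℝ))).add ((hasDerivAt_pow 4 y).const_mul (1/24 : ℝ))).add ((hasDerivAt_pow 6 y).const_mul (1/720 : ℝ)))
      refine h1.congr_deriv ?_
      push_cast; ring)
    (by norm_num)
    (fun y hy0 hy4 => by
      have hp := sL5 y hy0 hy4
      beta_reduce
      linarith)
  intro t ht0 ht4
  have := key t ht0 ht4
  beta_reduce at this
  linarith

lemma sL7 : ∀ t, 0 ≤ t → t ≤ 4 → 1*t^1 + 1/6*t^3 + 1/120*t^5 + 1/5040*t^7 ≤ Real.sinh t := by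
  have key := nn04 (fun t => Real.sinh t - (1*t^1 + 1/6*t^3 + 1/120*t^5 + 1/5040*t^7)) (fun t => Real.cosh t - ((1:ℝ) + 1/2*t^2 + 1/24*t^4 + 1/720*t^6))
    (fun y => by
      have h1 := (Real.hasDerivAt_sinh y).sub (((((hasDerivAt_pow 1 y).const_mul (1 : ℝ)).add ((hasDerivAt_pow 3 y).const_mul (1/6 : ℝ))).add ((hasDerivAt_pow 5 y).const_mul (1/120 : ℝ))).add ((hasDerivAt_pow 7 y).const_mul (1/5040 : ℝ)))
      refine h1.congr_deriv ?_
      push_cast; ring)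
    (by norm_num)
    (fun y hy0 hy4 => by
      have hp := cL6 y hy0 hy4
      beta_reduce
      linarith)
  intro t ht0 ht4
  have := key t ht0 ht4
  beta_reduce at this
  linarith

lemma cL8 : ∀ t, 0 ≤ t → t ≤ 4 → (1:ℝ) + 1/2*t^2 + 1/24*t^4 + 1/720*t^6 + 1/40320*t^8 ≤ Real.cosh t := by
  have key := nn04 (fun t => Real.cosh t - ((1:ℝ) + 1/2*t^2 + 1/24*t^4 + 1/720*t^6 + 1/40320*t^8)) (fun t => Real.sinh t - (1*t^1 + 1/6*t^3 + 1/120*t^5 + 1/5040*t^7))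
    (fun y => by
      have h1 := (Real.hasDerivAt_cosh y).sub (((((hasDerivAt_const y (1 : ℝ)).add ((hasDerivAt_pow 2 y).const_mul (1/2 : ℝ))).add ((hasDerivAt_pow 4 y).const_mul (1/24 : ℝ))).add ((hasDerivAt_pow 6 y).const_mul (1/720 : ℝ))).add ((hasDerivAt_pow 8 y).const_mul (1/40320 : ℝ)))
      refine h1.congr_deriv ?_
      push_cast; ring)
    (by norm_num)
    (fun y hy0 hy4 => by
      have hp := sL7 y hy0 hy4
      beta_reduce
      linarith)
  intro t ht0 ht4
  have := key t ht0 ht4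
  beta_reduce at this
  linarith

lemma sL9 : ∀ t, 0 ≤ t → t ≤ 4 → 1*t^1 + 1/6*t^3 + 1/120*t^5 + 1/5040*t^7 + 1/362880*t^9 ≤ Real.sinh t := by
  have key := nn04 (fun t => Real.sinh t - (1*t^1 + 1/6*t^3 + 1/120*t^5 + 1/5040*t^7 + 1/362880*t^9)) (fun t => Real.cosh t - ((1:ℝ) + 1/2*t^2 + 1/24*t^4 + 1/720*t^6 + 1/40320*t^8))
    (fun y => by
      have h1 := (Real.hasDerivAt_sinh y).sub ((((((hasDerivAt_pow 1 y).const_mul (1 : ℝ)).add ((hasDerivAt_pow 3 y).const_mul (1/6 : ℝ))).add ((hasDerivAt_pow 5 y).const_mul (1/120 : ℝ))).add ((hasDerivAt_pow 7 y).const_mul (1/5040 : ℝ))).add ((hasDerivAt_pow 9 y).const_mul (1/362880 : ℝ)))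
      refine h1.congr_deriv ?_
      push_cast; ring)
    (by norm_num)
    (fun y hy0 hy4 => by
      have hp := cL8 y hy0 hy4
      beta_reduce
      linarith)
  intro t ht0 ht4
  have := key t ht0 ht4
  beta_reduce at this
  linarith

lemma sU1 : ∀ t, 0 ≤ t → t ≤ 4 → Real.sinh t ≤ 28*t^1 := by
  have key := nn04 (fun t => (28*t^1) - Real.sinh t) (fun t => ((28:ℝ)) - Real.cosh t)
    (fun y => by
      have h1 := ((hasDerivAt_pow 1 y).const_mul (28 : ℝ)).sub (Real.hasDerivAt_sinh y)
      refine h1.congr_deriv ?_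
      push_cast; ring)
    (by norm_num)
    (fun y hy0 hy4 => by
      have hp := cosh_le_28 y hy0 hy4
      beta_reduce
      linarith)
  intro t ht0 ht4
  have := key t ht0 ht4
  beta_reduce at this
  linarith

lemma cU2 : ∀ t, 0 ≤ t → t ≤ 4 → Real.cosh t ≤ (1:ℝ) + 14*t^2 := by
  have key := nn04 (fun t => ((1:ℝ) + 14*t^2) - Real.cosh t) (fun t => (28*t^1) - Real.sinh t)
    (fun y => by
      have h1 := ((hasDerivAt_const y (1 : ℝ)).add ((hasDerivAt_pow 2 y).const_mul (14 : ℝ))).sub (Real.hasDerivAt_cosh y)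
      refine h1.congr_deriv ?_
      push_cast; ring)
    (by norm_num)
    (fun y hy0 hy4 => by
      have hp := sU1 y hy0 hy4
      beta_reduce
      linarith)
  intro t ht0 ht4
  have := key t ht0 ht4
  beta_reduce at this
  linarith

lemma sU3 : ∀ t, 0 ≤ t → t ≤ 4 → Real.sinh t ≤ 1*t^1 + 14/3*t^3 := by
  have key := nn04 (fun t => (1*t^1 + 14/3*t^3) - Real.sinh t) (fun t => ((1:ℝ) + 14*t^2) - Real.cosh t)
    (fun y => by
      have h1 := (((hasDerivAt_pow 1 y).const_mul (1 : ℝ)).add ((hasDerivAt_pow 3 y).const_mul (14/3 : ℝ))).sub (Real.hasDerivAt_sinh y)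
      refine h1.congr_deriv ?_
      push_cast; ring)
    (by norm_num)
    (fun y hy0 hy4 => by
      have hp := cU2 y hy0 hy4
      beta_reduce
      linarith)
  intro t ht0 ht4
  have := key t ht0 ht4
  beta_reduce at this
  linarith

lemma cU4 : ∀ t, 0 ≤ t → t ≤ 4 → Real.cosh t ≤ (1:ℝ) + 1/2*t^2 + 7/6*t^4 := by
  have key := nn04 (fun t => ((1:ℝ) + 1/2*t^2 + 7/6*t^4) - Real.cosh t) (fun t => (1*t^1 + 14/3*t^3) - Real.sinh t)
    (fun y => by
      have h1 := (((hasDerivAt_const y (1 : ℝ)).add ((hasDerivAt_pow 2 y).const_mul (1/2 : ℝ))).add ((hasDerivAt_pow 4 y).const_mul (7/6 : ℝ))).sub (Real.hasDerivAt_cosh y)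
      refine h1.congr_deriv ?_
      push_cast; ring)
    (by norm_num)
    (fun y hy0 hy4 => by
      have hp := sU3 y hy0 hy4
      beta_reduce
      linarith)
  intro t ht0 ht4
  have := key t ht0 ht4
  beta_reduce at this
  linarith

lemma sU5 : ∀ t, 0 ≤ t → t ≤ 4 → Real.sinh t ≤ 1*t^1 + 1/6*t^3 + 7/30*t^5 := by
  have key := nn04 (fun t => (1*t^1 + 1/6*t^3 + 7/30*t^5) - Real.sinh t) (fun t => ((1:ℝ) + 1/2*t^2 + 7/6*t^4) - Real.cosh t)
    (fun y => by
      have h1 := ((((hasDerivAt_pow 1 y).const_mul (1 : ℝ)).add ((hasDerivAt_pow 3 y).const_mul (1/6 : ℝ))).add ((hasDerivAt_pow 5 y).const_mul (7/30 : ℝ))).sub (Real.hasDerivAt_sinh y)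
      refine h1.congr_deriv ?_
      push_cast; ring)
    (by norm_num)
    (fun y hy0 hy4 => by
      have hp := cU4 y hy0 hy4
      beta_reduce
      linarith)
  intro t ht0 ht4
  have := key t ht0 ht4
  beta_reduce at this
  linarith

lemma cU6 : ∀ t, 0 ≤ t → t ≤ 4 → Real.cosh t ≤ (1:ℝ) + 1/2*t^2 + 1/24*t^4 + 7/180*t^6 := by
  have key := nn04 (fun t => ((1:ℝ) + 1/2*t^2 + 1/24*t^4 + 7/180*t^6) - Real.cosh t) (fun t => (1*t^1 + 1/6*t^3 + 7/30*t^5) - Real.sinh t)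
    (fun y => by
      have h1 := ((((hasDerivAt_const y (1 : ℝ)).add ((hasDerivAt_pow 2 y).const_mul (1/2 : ℝ))).add ((hasDerivAt_pow 4 y).const_mul (1/24 : ℝ))).add ((hasDerivAt_pow 6 y).const_mul (7/180 : ℝ))).sub (Real.hasDerivAt_cosh y)
      refine h1.congr_deriv ?_
      push_cast; ring)
    (by norm_num)
    (fun y hy0 hy4 => by
      have hp := sU5 y hy0 hy4
      beta_reduce
      linarith)
  intro t ht0 ht4
  have := key t ht0 ht4
  beta_reduce at this
  linarith

lemma sU7 : ∀ t, 0 ≤ t → t ≤ 4 → Real.sinh t ≤ 1*t^1 + 1/6*t^3 + 1/120*t^5 + 1/180*t^7 := by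
  have key := nn04 (fun t => (1*t^1 + 1/6*t^3 + 1/120*t^5 + 1/180*t^7) - Real.sinh t) (fun t => ((1:ℝ) + 1/2*t^2 + 1/24*t^4 + 7/180*t^6) - Real.cosh t)
    (fun y => by
      have h1 := (((((hasDerivAt_pow 1 y).const_mul (1 : ℝ)).add ((hasDerivAt_pow 3 y).const_mul (1/6 : ℝ))).add ((hasDerivAt_pow 5 y).const_mul (1/120 : ℝ))).add ((hasDerivAt_pow 7 y).const_mul (1/180 : ℝ))).sub (Real.hasDerivAt_sinh y)
      refine h1.congr_deriv ?_
      push_cast; ring)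
    (by norm_num)
    (fun y hy0 hy4 => by
      have hp := cU6 y hy0 hy4
      beta_reduce
      linarith)
  intro t ht0 ht4
  have := key t ht0 ht4
  beta_reduce at this
  linarith

lemma cU8 : ∀ t, 0 ≤ t → t ≤ 4 → Real.cosh t ≤ (1:ℝ) + 1/2*t^2 + 1/24*t^4 + 1/720*t^6 + 1/1440*t^8 := by
  have key := nn04 (fun t => ((1:ℝ) + 1/2*t^2 + 1/24*t^4 + 1/720*t^6 + 1/1440*t^8) - Real.cosh t) (fun t => (1*t^1 + 1/6*t^3 + 1/120*t^5 + 1/180*t^7) - Real.sinh t)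
    (fun y => by
      have h1 := (((((hasDerivAt_const y (1 : ℝ)).add ((hasDerivAt_pow 2 y).const_mul (1/2 : ℝ))).add ((hasDerivAt_pow 4 y).const_mul (1/24 : ℝ))).add ((hasDerivAt_pow 6 y).const_mul (1/720 : ℝ))).add ((hasDerivAt_pow 8 y).const_mul (1/1440 : ℝ))).sub (Real.hasDerivAt_cosh y)
      refine h1.congr_deriv ?_
      push_cast; ring)
    (by norm_num)
    (fun y hy0 hy4 => by
      have hp := sU7 y hy0 hy4
      beta_reduce
      linarith)
  intro t ht0 ht4
  have := key t ht0 ht4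
  beta_reduce at this
  linarith

lemma sU9 : ∀ t, 0 ≤ t → t ≤ 4 → Real.sinh t ≤ 1*t^1 + 1/6*t^3 + 1/120*t^5 + 1/5040*t^7 + 1/12960*t^9 := by
  have key := nn04 (fun t => (1*t^1 + 1/6*t^3 + 1/120*t^5 + 1/5040*t^7 + 1/12960*t^9) - Real.sinh t) (fun t => ((1:ℝ) + 1/2*t^2 + 1/24*t^4 + 1/720*t^6 + 1/1440*t^8) - Real.cosh t)
    (fun y => by
      have h1 := ((((((hasDerivAt_pow 1 y).const_mul (1 : ℝ)).add ((hasDerivAt_pow 3 y).const_mul (1/6 : ℝ))).add ((hasDerivAt_pow 5 y).const_mul (1/120 : ℝ))).add ((hasDerivAt_pow 7 y).const_mul (1/5040 : ℝ))).add ((hasDerivAt_pow 9 y).const_mul (1/12960 : ℝ))).sub (Real.hasDerivAt_sinh y)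
      refine h1.congr_deriv ?_
      push_cast; ring)
    (by norm_num)
    (fun y hy0 hy4 => by
      have hp := cU8 y hy0 hy4
      beta_reduce
      linarith)
  intro t ht0 ht4
  have := key t ht0 ht4
  beta_reduce at this
  linarith

lemma cU10 : ∀ t, 0 ≤ t → t ≤ 4 → Real.cosh t ≤ (1:ℝ) + 1/2*t^2 + 1/24*t^4 + 1/720*t^6 + 1/40320*t^8 + 1/129600*t^10 := by
  have key := nn04 (fun t => ((1:ℝ) + 1/2*t^2 + 1/24*t^4 + 1/720*t^6 + 1/40320*t^8 + 1/129600*t^10) - Real.cosh t) (fun t => (1*t^1 + 1/6*t^3 + 1/120*t^5 + 1/5040*t^7 + 1/12960*t^9) - Real.sinh t)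
    (fun y => by
      have h1 := ((((((hasDerivAt_const y (1 : ℝ)).add ((hasDerivAt_pow 2 y).const_mul (1/2 : ℝ))).add ((hasDerivAt_pow 4 y).const_mul (1/24 : ℝ))).add ((hasDerivAt_pow 6 y).const_mul (1/720 : ℝ))).add ((hasDerivAt_pow 8 y).const_mul (1/40320 : ℝ))).add ((hasDerivAt_pow 10 y).const_mul (1/129600 : ℝ))).sub (Real.hasDerivAt_cosh y)
      refine h1.congr_deriv ?_
      push_cast; ring)
    (by norm_num)
    (fun y hy0 hy4 => by
      have hp := sU9 y hy0 hy4
      beta_reduce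
      linarith)
  intro t ht0 ht4
  have := key t ht0 ht4
  beta_reduce at this
  linarith

lemma sU11 : ∀ t, 0 ≤ t → t ≤ 4 → Real.sinh t ≤ 1*t^1 + 1/6*t^3 + 1/120*t^5 + 1/5040*t^7 + 1/362880*t^9 + 1/1425600*t^11 := by
  have key := nn04 (fun t => (1*t^1 + 1/6*t^3 + 1/120*t^5 + 1/5040*t^7 + 1/362880*t^9 + 1/1425600*t^11) - Real.sinh t) (fun t => ((1:ℝ) + 1/2*t^2 + 1/24*t^4 + 1/720*t^6 + 1/40320*t^8 + 1/129600*t^10) - Real.cosh t)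
    (fun y => by
      have h1 := (((((((hasDerivAt_pow 1 y).const_mul (1 : ℝ)).add ((hasDerivAt_pow 3 y).const_mul (1/6 : ℝ))).add ((hasDerivAt_pow 5 y).const_mul (1/120 : ℝ))).add ((hasDerivAt_pow 7 y).const_mul (1/5040 : ℝ))).add ((hasDerivAt_pow 9 y).const_mul (1/362880 : ℝ))).add ((hasDerivAt_pow 11 y).const_mul (1/1425600 : ℝ))).sub (Real.hasDerivAt_sinh y)
      refine h1.congr_deriv ?_
      push_cast; ring)
    (by norm_num)
    (fun y hy0 hy4 => by
      have hp := cU10 y hy0 hy4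
      beta_reduce
      linarith)
  intro t ht0 ht4
  have := key t ht0 ht4
  beta_reduce at this
  linarith


lemma N1 : ∀ t, 0 ≤ t → t ≤ 4 →
    1/3*t^3 + 1/30*t^5 + 1/840*t^7 + 1/45360*t^9 + 1/3991680*t^11 ≤ t * Real.cosh t - Real.sinh t := by
  have key := nn04
      (fun t => (t * Real.cosh t - Real.sinh t) - (1/3*t^3 + 1/30*t^5 + 1/840*t^7 + 1/45360*t^9 + 1/3991680*t^11))
      (fun t => t * Real.sinh t - (1*t^2 + 1/6*t^4 + 1/120*t^6 + 1/5040*t^8 + 1/362880*t^10))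
      (fun y => by
        have h1 := (((hasDerivAt_id y).mul (Real.hasDerivAt_cosh y)).sub (Real.hasDerivAt_sinh y)).sub
          ((((((hasDerivAt_pow 3 y).const_mul (1/3:ℝ)).add ((hasDerivAt_pow 5 y).const_mul (1/30:ℝ))).add
            ((hasDerivAt_pow 7 y).const_mul (1/840:ℝ))).add ((hasDerivAt_pow 9 y).const_mul (1/45360:ℝ))).add
            ((hasDerivAt_pow 11 y).const_mul (1/3991680:ℝ)))
        refine h1.congr_deriv ?_
        simp only [id_eq]; push_cast; ring)
      (by norm_num)
      (fun y hy0 hy4 => by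
        have hp := sL9 y hy0 hy4
        beta_reduce
        nlinarith [mul_le_mul_of_nonneg_left hp hy0])
  intro t ht0 ht4
  have := key t ht0 ht4
  beta_reduce at this
  linarith


noncomputable def Ap (u : ℝ) : ℝ := (1/3:ℝ) + 1/30*u^1 + 1/840*u^2 + 1/45360*u^3 + 1/3991680*u^4
noncomputable def Bp (u : ℝ) : ℝ := (1:ℝ) + 1/6*u^1 + 1/120*u^2 + 1/5040*u^3 + 1/362880*u^4 + 1/1425600*u^5

lemma Qpos (u : ℝ) (hu : 0 < u) (hu16 : u ≤ 16) :
    Bp u ^ 2 * (1 + u/30)^5 < 243 * Ap u ^ 5 := by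
  have hR : (0:ℝ) < (17/2520:ℝ) + 71/25200*u^1 + 25211/46569600*u^2 + 156637/2494800000*u^3 + 2367613/488980800000*u^4 + 196403/750141000000*u^5 + 567370033/54218191104000000*u^6 + 4920176081/14638911598080000000*u^7 + 5723629913/614834287119360000000*u^8 + 29435159/147560228908646400000*u^9 + 3441548797/1623162517995110400000000*u^10 + -5033417/521730809355571200000000*u^11 + 2500783/58433850647823974400000000*u^12 + 114900223/5259046558304157696000000000*u^13 + 265693/592379004327380322877440000*u^14 + 643/169251144093537235107840000*u^15 + 23/947806406923808516603904000*u^16 + 1/9478064069238085166039040000*u^17 + 1/4170348190464757473057177600000*u^18 := by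
    have h10 : (0:ℝ) ≤ u^10 := by positivity
    have hlin : (0:ℝ) ≤ 3441548797/1623162517995110400000000 + (-5033417/521730809355571200000000)*u := by
      nlinarith
    have hkey : (0:ℝ) ≤ u^10 * (3441548797/1623162517995110400000000 + (-5033417/521730809355571200000000)*u) :=
      mul_nonneg h10 hlin
    have e1 : (0:ℝ) ≤ u^1 := by positivity
    have e2 : (0:ℝ) ≤ u^2 := by positivity
    have e3 : (0:ℝ) ≤ u^3 := by positivity
    have e4 : (0:ℝ) ≤ u^4 := by positivity
    have e5 : (0:ℝ) ≤ u^5 := by positivity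
    have e6 : (0:ℝ) ≤ u^6 := by positivity
    have e7 : (0:ℝ) ≤ u^7 := by positivity
    have e8 : (0:ℝ) ≤ u^8 := by positivity
    have e9 : (0:ℝ) ≤ u^9 := by positivity
    have e12 : (0:ℝ) ≤ u^12 := by positivity
    have e13 : (0:ℝ) ≤ u^13 := by positivity
    have e14 : (0:ℝ) ≤ u^14 := by positivity
    have e15 : (0:ℝ) ≤ u^15 := by positivity
    have e16 : (0:ℝ) ≤ u^16 := by positivity
    have e17 : (0:ℝ) ≤ u^17 := by positivity
    have e18 : (0:ℝ) ≤ u^18 := by positivity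
    nlinarith [hkey]
  have hiden : 243 * Ap u ^ 5 - Bp u ^ 2 * (1 + u/30)^5 = u^2 * ((17/2520:ℝ) + 71/25200*u^1 + 25211/46569600*u^2 + 156637/2494800000*u^3 + 2367613/488980800000*u^4 + 196403/750141000000*u^5 + 567370033/54218191104000000*u^6 + 4920176081/14638911598080000000*u^7 + 5723629913/614834287119360000000*u^8 + 29435159/147560228908646400000*u^9 + 3441548797/1623162517995110400000000*u^10 + -5033417/521730809355571200000000*u^11 + 2500783/58433850647823974400000000*u^12 + 114900223/5259046558304157696000000000*u^13 + 265693/592379004327380322877440000*u^14 + 643/169251144093537235107840000*u^15 + 23/947806406923808516603904000*u^16 + 1/9478064069238085166039040000*u^17 + 1/4170348190464757473057177600000*u^18) := by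
    unfold Ap Bp
    ring
  nlinarith [mul_pos (pow_pos hu 2) hR]

lemma C4le (u : ℝ) (hu : 0 ≤ u) :
    (1:ℝ) + 1/2*u^1 + 1/24*u^2 + 1/720*u^3 + 1/40320*u^4 + 1/129600*u^5 ≤ (1 + u/30)^15 := by
  have e : ∀ n : ℕ, (0:ℝ) ≤ u^n := fun n => pow_nonneg hu n
  nlinarith [e 2, e 3, e 4, e 5, e 6, e 7, e 8, e 9, e 10, e 11, e 12, e 13, e 14, e 15,
    sq_nonneg u]


set_option maxHeartbeats 2000000 in
lemma core (t : ℝ) (ht : 0 < t) :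
    t^2 * Real.cosh t ^ ((1:ℝ)/15) * Real.sinh t
      < 3 * (Real.sinh t / t) ^ ((3:ℝ)/5) * (t * Real.cosh t - Real.sinh t) := by
  have hs : 0 < Real.sinh t := by positivity
  have hc : (1:ℝ) ≤ Real.cosh t := Real.one_le_cosh t
  have hc0 : 0 < Real.cosh t := by linarith
  have hy : 0 < Real.sinh t / t := div_pos hs ht
  set s := Real.sinh t with hsdef
  set c := Real.cosh t with hcdef
  set y := s / t with hydef
  clear_value s c
  have hy35 : 0 < y ^ ((3:ℝ)/5) := Real.rpow_pos_of_pos hy _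
  have hysplit : y ^ ((2:ℝ)/5) * y ^ ((3:ℝ)/5) = y := by
    rw [← Real.rpow_add hy]; norm_num
  rcases le_or_gt t 4 with ht4 | ht4
  · -- small branch
    have hu : 0 < t^2 := by positivity
    have hu16 : t^2 ≤ 16 := by nlinarith
    -- c^{1/15} ≤ 1 + t^2/30
    have hcle : c ≤ (1 + t^2/30)^15 := by
      have h1 := cU10 t ht.le ht4
      rw [← hcdef] at h1
      have h2 := C4le (t^2) (by positivity)
      nlinarith [h1, h2]
    have hc15 : c ^ ((1:ℝ)/15) ≤ 1 + t^2/30 := by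
      have hb : (0:ℝ) ≤ 1 + t^2/30 := by positivity
      have h3 := Real.rpow_le_rpow (by linarith : (0:ℝ) ≤ c) hcle (by norm_num : (0:ℝ) ≤ 1/15)
      rwa [← Real.rpow_natCast (1 + t^2/30) 15, ← Real.rpow_mul hb,
        (by norm_num : ((15:ℕ):ℝ) * (1/15) = 1), Real.rpow_one] at h3
    -- y ≤ Bp (t^2)
    have hyB : y ≤ Bp (t^2) := by
      have h1 := sU11 t ht.le ht4
      rw [← hsdef] at h1
      rw [hydef, div_le_iff₀ ht]
      unfold Bp; nlinarith [h1]
    have hA : t^3 * Ap (t^2) ≤ t*c - s := by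
      have h1 := N1 t ht.le ht4
      rw [← hsdef, ← hcdef] at h1
      unfold Ap; nlinarith [h1]
    have hApos : 0 < Ap (t^2) := by unfold Ap; positivity
    have hBpos : 0 < Bp (t^2) := by unfold Bp; positivity
    have htcs : 0 < t*c - s := by
      have := mul_pos (pow_pos ht 3) hApos
      linarith
    -- a := (1+t^2/30) * y^{2/5};  b := 3*(t*c-s)/t^3
    set a := (1 + t^2/30) * y ^ ((2:ℝ)/5) with hadef
    set b := 3*(t*c - s)/t^3 with hbdef
    have ha0 : 0 ≤ a := by positivity
    have hb0 : 0 ≤ b := by positivity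
    have hy25pow : (y ^ ((2:ℝ)/5))^(5:ℕ) = y^2 := by
      rw [← Real.rpow_natCast (y ^ ((2:ℝ)/5)) 5, ← Real.rpow_mul hy.le,
        (by norm_num : (2:ℝ)/5 * ((5:ℕ):ℝ) = 2), Real.rpow_two]
    have hab : a^5 < b^5 := by
      have e1 : a^5 = (1 + t^2/30)^5 * y^2 := by
        rw [hadef, mul_pow, hy25pow]
      have e2 : y^2 ≤ Bp (t^2)^2 := by
        apply pow_le_pow_left₀ hy.le hyB
      have e3 : (1 + t^2/30)^5 * y^2 ≤ Bp (t^2)^2 * (1 + t^2/30)^5 := by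
        have h0 : (0:ℝ) ≤ (1 + t^2/30)^5 := by positivity
        calc (1 + t^2/30)^5 * y^2 ≤ (1 + t^2/30)^5 * Bp (t^2)^2 :=
              mul_le_mul_of_nonneg_left e2 h0
          _ = Bp (t^2)^2 * (1 + t^2/30)^5 := mul_comm _ _
      have e4 := Qpos (t^2) hu hu16
      have e5 : 243 * Ap (t^2)^5 ≤ b^5 := by
        rw [hbdef, div_pow]
        rw [le_div_iff₀ (by positivity : (0:ℝ) < (t^3)^5)]
        have e6 : (t^3 * Ap (t^2))^5 ≤ (t*c - s)^5 :=
          pow_le_pow_left₀ (by positivity) hA 5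
        rw [mul_pow] at e6
        rw [show (3*(t*c-s))^5 = 243 * (t*c-s)^5 by ring]
        linarith [e6]
      calc a^5 = (1 + t^2/30)^5 * y^2 := e1
        _ ≤ Bp (t^2)^2 * (1 + t^2/30)^5 := e3
        _ < 243 * Ap (t^2)^5 := e4
        _ ≤ b^5 := e5
    have haltb : a < b := lt_of_pow_lt_pow_left₀ 5 hb0 hab
    -- combine
    have hfin : t^3 * (a * y ^ ((3:ℝ)/5)) < t^3 * (b * y ^ ((3:ℝ)/5)) := by
      apply mul_lt_mul_of_pos_left _ (by positivity : (0:ℝ) < t^3)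
      exact mul_lt_mul_of_pos_right haltb hy35
    have hL : t^2 * c ^ ((1:ℝ)/15) * s ≤ t^3 * (a * y ^ ((3:ℝ)/5)) := by
      have e8 : t^2 * c ^ ((1:ℝ)/15) * s = t^3 * (c ^ ((1:ℝ)/15) * y) := by
        rw [hydef]; field_simp
      have ha_y : a * y ^ ((3:ℝ)/5) = (1 + t^2/30) * y := by
        rw [hadef, mul_assoc, hysplit]
      rw [e8, ha_y]
      have e9 : c ^ ((1:ℝ)/15) * y ≤ (1 + t^2/30) * y :=
        mul_le_mul_of_nonneg_right hc15 hy.le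
      exact mul_le_mul_of_nonneg_left e9 (by positivity)
    have hR : t^3 * (b * y ^ ((3:ℝ)/5)) = 3 * y ^ ((3:ℝ)/5) * (t*c - s) := by
      rw [hbdef]; field_simp
    calc t^2 * c ^ ((1:ℝ)/15) * s ≤ t^3 * (a * y ^ ((3:ℝ)/5)) := hL
      _ < t^3 * (b * y ^ ((3:ℝ)/5)) := hfin
      _ = 3 * y ^ ((3:ℝ)/5) * (t*c - s) := hR
  · -- large branch t > 4
    have hsc : s < c := by
      have h1 := Real.cosh_sub_sinh t
      rw [← hsdef, ← hcdef] at h1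
      have h2 : (0:ℝ) < Real.exp (-t) := Real.exp_pos _
      linarith
    have htcs : (3/4)*t*c ≤ t*c - s := by nlinarith
    have htcs0 : 0 < t*c - s := by nlinarith
    -- exp bound
    have hexp : (8*t)^24 / 620448401733239439360000 ≤ Real.exp (8*t) := by
      have h1 := Real.sum_le_exp_of_nonneg (by linarith : (0:ℝ) ≤ 8*t) 25
      have h2 : ((8*t)^24 : ℝ) / (Nat.factorial 24 : ℝ)
          ≤ ∑ i ∈ Finset.range 25, (8*t)^i / (Nat.factorial i : ℝ) := by
        apply Finset.single_le_sum (f := fun i => ((8*t):ℝ)^i / (Nat.factorial i : ℝ))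
        · intro i _
          positivity
        · simp
      have h3 : (Nat.factorial 24 : ℝ) = 620448401733239439360000 := by
        norm_num [Nat.factorial]
      rw [h3] at h2
      linarith
    have hexp8 : Real.exp (8*t) = (Real.exp t)^8 := by
      rw [← Real.exp_nat_mul]; norm_num
    have hec : Real.exp t ≤ 2*c := by
      rw [hcdef, Real.cosh_eq]
      have := (Real.exp_pos (-t)).le
      linarith
    have hc8 : (8*t)^24 / 620448401733239439360000 ≤ 256 * c^8 := by
      have h4 : (Real.exp t)^8 ≤ (2*c)^8 := pow_le_pow_left₀ (Real.exp_pos t).le hec 8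
      have h5 : ((2:ℝ)*c)^8 = 256*c^8 := by ring
      rw [hexp8] at hexp
      linarith [hexp, h4.trans_eq h5]
    have goal1 : t^24 < (9/4:ℝ)^15 * c^8 := by nlinarith [hc8, pow_pos hc0 8]
    have goal2 : t^39 * c * s^15 < 3^15 * s^9 * (t*c - s)^15 := by
      have s6 : s^6 ≤ c^6 := pow_le_pow_left₀ hs.le hsc.le 6
      have l1 : t^39 * c * s^15 ≤ t^39 * c^7 * s^9 := by
        have : (0:ℝ) ≤ t^39 * c * s^9 := by positivity
        linarith [mul_le_mul_of_nonneg_left s6 this]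
      have l2 : t^39 * c^7 * s^9 < (9/4:ℝ)^15 * c^8 * (t^15 * c^7 * s^9) := by
        linarith [mul_lt_mul_of_pos_right goal1 (show (0:ℝ) < t^15*c^7*s^9 by positivity)]
      have l3 : (9/4:ℝ)^15 * c^8 * (t^15 * c^7 * s^9) = 3^15 * s^9 * ((3/4)*t*c)^15 := by
        ring
      have l4 : 3^15 * s^9 * ((3/4)*t*c)^15 ≤ 3^15 * s^9 * (t*c-s)^15 := by
        have h6 : ((3/4)*t*c)^15 ≤ (t*c-s)^15 := pow_le_pow_left₀ (by positivity) htcs 15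
        have : (0:ℝ) ≤ 3^15 * s^9 := by positivity
        linarith [mul_le_mul_of_nonneg_left h6 this]
      calc t^39 * c * s^15 ≤ t^39 * c^7 * s^9 := l1
        _ < (9/4:ℝ)^15 * c^8 * (t^15 * c^7 * s^9) := l2
        _ = 3^15 * s^9 * ((3/4)*t*c)^15 := l3
        _ ≤ 3^15 * s^9 * (t*c-s)^15 := l4
    -- powers of a and b
    set a := t^2 * c ^ ((1:ℝ)/15) * s with hadef
    set b := 3 * y ^ ((3:ℝ)/5) * (t*c-s) with hbdef
    have hb0 : 0 ≤ b := by
      apply mul_nonneg (mul_nonneg (by norm_num) (Real.rpow_nonneg hy.le _)) htcs0.le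
    have hc15pow : (c ^ ((1:ℝ)/15))^(15:ℕ) = c := by
      rw [← Real.rpow_natCast (c ^ ((1:ℝ)/15)) 15, ← Real.rpow_mul (by linarith : (0:ℝ) ≤ c),
        (by norm_num : (1:ℝ)/15 * ((15:ℕ):ℝ) = 1), Real.rpow_one]
    have hy9pow : (y ^ ((3:ℝ)/5))^(15:ℕ) = y^9 := by
      rw [← Real.rpow_natCast (y ^ ((3:ℝ)/5)) 15, ← Real.rpow_mul hy.le,
        (by norm_num : (3:ℝ)/5 * ((15:ℕ):ℝ) = 9), ← Real.rpow_natCast y 9]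
      norm_num
    have hab : a^15 < b^15 := by
      have ea : a^15 = t^30 * c * s^15 := by
        rw [hadef, mul_pow, mul_pow, hc15pow]
        ring
      have eb : b^15 = 3^15 * y^9 * (t*c-s)^15 := by
        rw [hbdef, mul_pow, mul_pow, hy9pow]
      rw [ea, eb]
      have ey : y^9 = s^9/t^9 := by rw [hydef, div_pow]
      rw [ey]
      rw [show (3:ℝ)^15 * (s^9/t^9) * (t*c-s)^15 = (3^15 * s^9 * (t*c-s)^15)/t^9 by ring]
      rw [lt_div_iff₀ (by positivity : (0:ℝ) < t^9)]
      linarith [goal2]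
    have := lt_of_pow_lt_pow_left₀ 15 hb0 hab
    rw [hadef, hbdef] at this
    exact this


noncomputable def fF (t : ℝ) : ℝ :=
  2 * (Real.sinh t / t) ^ ((8:ℝ)/5) - 1 - Real.cosh t ^ ((16:ℝ)/15)

lemma fF_hasDeriv (t : ℝ) (ht : 0 < t) :
    HasDerivAt fF
      (2 * ((Real.cosh t * t - Real.sinh t * 1) / t^2 * ((8:ℝ)/5) * (Real.sinh t / t) ^ ((8:ℝ)/5 - 1))
        - Real.sinh t * ((16:ℝ)/15) * Real.cosh t ^ ((16:ℝ)/15 - 1)) t := by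
  have h1 : HasDerivAt (fun y => Real.sinh y / y)
      ((Real.cosh t * t - Real.sinh t * 1) / t^2) t :=
    (Real.hasDerivAt_sinh t).div (hasDerivAt_id t) ht.ne'
  have h2 := h1.rpow_const (p := (8:ℝ)/5) (Or.inr (by norm_num))
  have h3 := h2.const_mul (2:ℝ)
  have h4 := (Real.hasDerivAt_cosh t).rpow_const (p := (16:ℝ)/15) (Or.inr (by norm_num))
  have h5 := (h3.sub_const 1).sub h4
  exact h5

lemma fF_deriv_pos (t : ℝ) (ht : 0 < t) : 0 < deriv fF t := by
  rw [(fF_hasDeriv t ht).deriv]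
  have hs : 0 < Real.sinh t := by positivity
  have hc : 0 < Real.cosh t := Real.cosh_pos t
  have hy : 0 < Real.sinh t / t := div_pos hs ht
  have e1 : (8:ℝ)/5 - 1 = 3/5 := by norm_num
  have e2 : (16:ℝ)/15 - 1 = 1/15 := by norm_num
  rw [e1, e2]
  have hcore := core t ht
  have e3 : 2 * ((Real.cosh t * t - Real.sinh t * 1) / t^2 * ((8:ℝ)/5) * (Real.sinh t / t) ^ ((3:ℝ)/5))
        - Real.sinh t * ((16:ℝ)/15) * Real.cosh t ^ ((1:ℝ)/15)
      = (16/15) * (1/t^2) *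
        (3 * (Real.sinh t / t) ^ ((3:ℝ)/5) * (t * Real.cosh t - Real.sinh t)
          - t^2 * Real.cosh t ^ ((1:ℝ)/15) * Real.sinh t) := by
    field_simp
    ring
  rw [e3]
  have : (0:ℝ) < 16/15 * (1/t^2) := by positivity
  exact mul_pos this (by linarith)

lemma fF_mono : StrictMonoOn fF (Ioi (0:ℝ)) := by
  apply strictMonoOn_of_deriv_pos (convex_Ioi 0)
  · intro x hx
    exact (fF_hasDeriv x hx).continuousAt.continuousWithinAt
  · intro x hx
    rw [interior_Ioi] at hx
    exact fF_deriv_pos x hx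

lemma fF_lim : Tendsto fF (nhdsWithin 0 (Ioi (0:ℝ))) (nhds 0) := by
  have hslope : Tendsto (fun t => Real.sinh t / t) (nhdsWithin 0 {(0:ℝ)}ᶜ) (nhds 1) := by
    have h := Real.hasDerivAt_sinh 0
    rw [hasDerivAt_iff_tendsto_slope] at h
    rw [Real.cosh_zero] at h
    apply h.congr'
    filter_upwards [self_mem_nhdsWithin] with t ht
    simp [slope_def_field, Real.sinh_zero]
  have hslope' : Tendsto (fun t => Real.sinh t / t) (nhdsWithin 0 (Ioi (0:ℝ))) (nhds 1) :=
    hslope.mono_left (nhdsWithin_mono 0 (fun x hx => (by simp; exact ne_of_gt hx : x ∈ ({(0:ℝ)}ᶜ : Set ℝ))))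
  have hA : Tendsto (fun t => 2 * (Real.sinh t / t) ^ ((8:ℝ)/5))
      (nhdsWithin 0 (Ioi (0:ℝ))) (nhds 2) := by
    have h2 := ((Real.continuousAt_rpow_const 1 ((8:ℝ)/5) (Or.inl one_ne_zero)).tendsto).comp hslope'
    rw [Real.one_rpow] at h2
    have h3 := h2.const_mul (2:ℝ)
    simpa using h3
  have hB : Tendsto (fun t => Real.cosh t ^ ((16:ℝ)/15))
      (nhdsWithin 0 (Ioi (0:ℝ))) (nhds 1) := by
    have hcont : ContinuousAt (fun t => Real.cosh t ^ ((16:ℝ)/15)) 0 := by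
      have hc1 : ContinuousAt (fun y : ℝ => y ^ ((16:ℝ)/15)) (Real.cosh 0) := by
        rw [Real.cosh_zero]
        exact Real.continuousAt_rpow_const 1 _ (Or.inl one_ne_zero)
      exact hc1.comp Real.continuous_cosh.continuousAt
    have h4 := hcont.tendsto
    rw [Real.cosh_zero, Real.one_rpow] at h4
    exact h4.mono_left nhdsWithin_le_nhds
  have h5 := (hA.sub_const 1).sub hB
  unfold fF
  have : (2:ℝ) - 1 - 1 = 0 := by norm_num
  rw [this] at h5
  exact h5

theorem stmt_16 (x : ℝ) (hx : 0 < x) :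
    Real.sinh x / x > (1 / 2 + (1 / 2) * (Real.cosh x) ^ ((16 : ℝ) / 15)) ^ ((5 : ℝ) / 8) := by
  have hx2 : x/2 ∈ Ioi (0:ℝ) := by simp; linarith
  have hxm : x ∈ Ioi (0:ℝ) := hx
  have h1 : fF (x/2) < fF x := fF_mono hx2 hxm (by linarith)
  have h2 : 0 ≤ fF (x/2) := by
    apply le_of_tendsto fF_lim
    filter_upwards [Ioo_mem_nhdsGT_of_mem (show (0:ℝ) ∈ Ico 0 (x/2) from ⟨le_refl _, by linarith⟩)]
      with t ht
    exact (fF_mono (by simpa using ht.1) hx2 ht.2).le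
  have hfx : 0 < fF x := lt_of_le_of_lt h2 h1
  unfold fF at hfx
  set M := 1/2 + (1/2) * Real.cosh x ^ ((16:ℝ)/15) with hM
  have hMpos : 0 < M := by
    have := Real.rpow_pos_of_pos (Real.cosh_pos x) ((16:ℝ)/15)
    rw [hM]; positivity
  have hlt : M < (Real.sinh x / x) ^ ((8:ℝ)/5) := by
    rw [hM]; linarith
  have h6 := Real.rpow_lt_rpow hMpos.le hlt (by norm_num : (0:ℝ) < 5/8)
  have hy0 : (0:ℝ) ≤ Real.sinh x / x := by positivity
  have e7 : ((Real.sinh x / x) ^ ((8:ℝ)/5)) ^ ((5:ℝ)/8) = Real.sinh x / x := by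
    rw [← Real.rpow_mul hy0, (by norm_num : (8:ℝ)/5 * (5/8) = 1), Real.rpow_one]
  rw [e7] at h6
  exact h6
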